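/- Let R = ⊕_{x ∈ A_4} R_x be a finite-dimensional A_4-graded k-algebra with dim R = 5, dim R_1 = 1 spanned by the identity, whose support is {1} ∪ C where C is a conjugacy class of 3-cycles, each nonidentity component one-dimensional. Then R is not semisimple, since the span of the nonidentity components is a nonzero ideal with zero multiplication. -/

import Mathlib

set_option maxHeartbeats 2000000 in
lemma a4_threecycle_key : ∀ c x y : alternatingGroup (Fin 4), c ^ 3 = 1 → c ≠ 1 →
    IsConj c x → IsConj c y → x * y ≠ 1 ∧ ¬ IsConj c (x * y) := by decide

/-- Let `R = ⊕_{x ∈ A₄} R_x` be a finite-dimensional `A₄`-graded algebra over a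
field `k` with `dim R = 5`, `R_1 = k·1`, whose support is `{1} ∪ C` where `C` is
the conjugacy class (in `A₄`) of a 3-cycle `c`, each nonidentity component being
one-dimensional. Then `R` is not semisimple: the span of the nonidentity
components is a nonzero two-sided ideal with zero multiplication. -/
theorem a4_graded_algebra_not_semisimple
    {k : Type*} [Field k] {R : Type*} [Ring R] [Algebra k R] [FiniteDimensional k R]
    (ℬ : alternatingGroup (Fin 4) → Submodule k R) [DirectSum.Decomposition ℬ]
    (hone : (1 : R) ∈ ℬ 1)
    (hmul : ∀ g h : alternatingGroup (Fin 4), ∀ x ∈ ℬ g, ∀ y ∈ ℬ h, x * y ∈ ℬ (g * h))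
    (c : alternatingGroup (Fin 4))
    (hc : Equiv.Perm.IsThreeCycle (c : Equiv.Perm (Fin 4)))
    (hdim : Module.finrank k R = 5)
    (hB1 : ℬ 1 = Submodule.span k {(1 : R)})
    (hsupp : ∀ x : alternatingGroup (Fin 4), x ≠ 1 → ¬ IsConj c x → ℬ x = ⊥)
    (hcls : ∀ x : alternatingGroup (Fin 4), IsConj c x → Module.finrank k (ℬ x) = 1) :
    (∃ I : TwoSidedIdeal R, I ≠ ⊥ ∧ ∀ x ∈ I, ∀ y ∈ I, x * y = 0) ∧
      ¬ IsSemisimpleRing R := by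
  classical
  -- `c` has order 3 and is not the identity
  have hc3 : c ^ 3 = 1 := by
    have h := hc.orderOf
    have h2 : (c : Equiv.Perm (Fin 4)) ^ 3 = 1 := by rw [← h]; exact pow_orderOf_eq_one _
    ext : 1
    simpa using h2
  have hcne : c ≠ 1 := by
    intro h
    have hcoe : (c : Equiv.Perm (Fin 4)) = 1 := by rw [h]; rfl
    rw [hcoe] at hc
    simp [Equiv.Perm.IsThreeCycle] at hc
  have key : ∀ x y : alternatingGroup (Fin 4), IsConj c x → IsConj c y →
      x * y ≠ 1 ∧ ¬ IsConj c (x * y) := fun x y => a4_threecycle_key c x y hc3 hcne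
  -- the span of the nonidentity components
  set S : Submodule k R := ⨆ x : {g : alternatingGroup (Fin 4) // IsConj c g}, ℬ x.val
    with hSdef
  have hle : ∀ x : alternatingGroup (Fin 4), IsConj c x → ℬ x ≤ S := fun x hx =>
    le_iSup (fun i : {g : alternatingGroup (Fin 4) // IsConj c g} => ℬ i.val) ⟨x, hx⟩
  -- products of two elements of graded pieces over the class vanish
  have hBzero : ∀ x y : alternatingGroup (Fin 4), IsConj c x → IsConj c y →
      ∀ a ∈ ℬ x, ∀ b ∈ ℬ y, a * b = 0 := by
    intro x y hx hy a ha b hb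
    have h := hmul x y a ha b hb
    rwa [hsupp _ (key x y hx hy).1 (key x y hx hy).2, Submodule.mem_bot] at h
  -- `S` has zero multiplication
  have hSzero : ∀ a ∈ S, ∀ b ∈ S, a * b = 0 := by
    intro a ha
    refine Submodule.iSup_induction _ (motive := fun a => ∀ b ∈ S, a * b = 0) ha ?_ ?_ ?_
    · intro i x hx b hb
      refine Submodule.iSup_induction _ (motive := fun b => x * b = 0) hb ?_ ?_ ?_
      · intro j y hy
        exact hBzero _ _ i.2 j.2 x hx y hy
      · simp
      · intro y z h1 h2; rw [mul_add, h1, h2, add_zero]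
    · intro b _; simp
    · intro x y h1 h2 b hb; rw [add_mul, h1 b hb, h2 b hb, add_zero]
  -- every element of `R` lies in the supremum of the graded pieces
  have htop : ∀ r : R, r ∈ ⨆ g, ℬ g := by
    intro r
    rw [(DirectSum.Decomposition.isInternal ℬ).submodule_iSup_eq_top]
    trivial
  -- `S` absorbs multiplication from both sides
  have habsorb : ∀ s ∈ S, ∀ r : R, r * s ∈ S ∧ s * r ∈ S := by
    have hcomp : ∀ x : alternatingGroup (Fin 4), IsConj c x → ∀ s ∈ ℬ x, ∀ r : R,
        r * s ∈ S ∧ s * r ∈ S := by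
      intro x hx s hs r
      refine Submodule.iSup_induction _ (motive := fun r => r * s ∈ S ∧ s * r ∈ S)
        (htop r) ?_ ?_ ?_
      · intro g a ha
        by_cases hg1 : g = 1
        · subst hg1
          constructor
          · exact hle x hx (by simpa using hmul 1 x a ha s hs)
          · exact hle x hx (by simpa using hmul x 1 s hs a ha)
        · by_cases hgc : IsConj c g
          · constructor
            · have h := hmul g x a ha s hs
              rw [hsupp _ (key g x hgc hx).1 (key g x hgc hx).2, Submodule.mem_bot] at h
              rw [h]; exact S.zero_mem
            · have h := hmul x g s hs a ha
              rw [hsupp _ (key x g hx hgc).1 (key x g hx hgc).2, Submodule.mem_bot] at h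
              rw [h]; exact S.zero_mem
          · have ha0 : a = 0 := by
              rw [hsupp g hg1 hgc, Submodule.mem_bot] at ha; exact ha
            subst ha0
            simp [S.zero_mem]
      · simp [S.zero_mem]
      · intro a b h1 h2
        exact ⟨by rw [add_mul]; exact S.add_mem h1.1 h2.1,
               by rw [mul_add]; exact S.add_mem h1.2 h2.2⟩
    intro s hs
    refine Submodule.iSup_induction _ (motive := fun s => ∀ r : R, r * s ∈ S ∧ s * r ∈ S)
      hs ?_ ?_ ?_
    · intro i a ha r
      exact hcomp _ i.2 a ha r
    · intro r; simp [S.zero_mem]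
    · intro a b h1 h2 r
      exact ⟨by rw [mul_add]; exact S.add_mem (h1 r).1 (h2 r).1,
             by rw [add_mul]; exact S.add_mem (h1 r).2 (h2 r).2⟩
  -- `S` is nonzero
  have hSne : ∃ v : R, v ∈ S ∧ v ≠ 0 := by
    have hcc : IsConj c c := IsConj.refl c
    have hbc : ℬ c ≠ ⊥ := by
      intro h
      have := hcls c hcc
      rw [h] at this
      simp at this
    obtain ⟨v, hv, hv0⟩ := Submodule.exists_mem_ne_zero_of_ne_bot hbc
    exact ⟨v, hle c hcc hv, hv0⟩
  obtain ⟨v, hvS, hv0⟩ := hSne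
  -- build the two-sided ideal
  refine ⟨⟨TwoSidedIdeal.mk' (S : Set R) S.zero_mem (fun h1 h2 => S.add_mem h1 h2)
      (fun h1 => S.neg_mem h1) (fun {r s} hs => (habsorb s hs r).1)
      (fun {s r} hs => (habsorb s hs r).2), ?_, ?_⟩, ?_⟩
  · intro h
    have : v ∈ (⊥ : TwoSidedIdeal R) := by
      rw [← h, TwoSidedIdeal.mem_mk']; exact hvS
    rw [TwoSidedIdeal.mem_bot] at this
    exact hv0 this
  · intro x hx y hy
    rw [TwoSidedIdeal.mem_mk'] at hx hy
    exact hSzero x hx y hy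
  · -- not semisimple
    intro hss
    -- `S` is in particular a left ideal of `R`
    let L : Submodule R R :=
    { carrier := (S : Set R)
      add_mem' := fun h1 h2 => S.add_mem h1 h2
      zero_mem' := S.zero_mem
      smul_mem' := fun r s hs => (habsorb s hs r).1 }
    obtain ⟨J, hJ⟩ := exists_isCompl L
    have h1 : (1 : R) ∈ L ⊔ J := by rw [hJ.sup_eq_top]; trivial
    obtain ⟨e, he, f, hf, hef⟩ := Submodule.mem_sup.mp h1
    have hmem : v ∈ L := hvS
    have hv1 : v = v * e + v * f := by rw [← mul_add, hef, mul_one]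
    have hve : v * e = 0 := hSzero v hvS e he
    have hvf : v * f ∈ J := J.smul_mem v hf
    have hvJ : v ∈ J := by
      rw [hv1, hve, zero_add]; exact hvf
    have : v ∈ L ⊓ J := ⟨hmem, hvJ⟩
    rw [hJ.inf_eq_bot] at this
    exact hv0 this
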